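/- Let F be any field and k ∈ ℕ. If γ ∈ P(V^{k+2}) is graph-like and IM_{k+2}^F-stable, then its k-projection pr_k γ is C_k-stable. -/

import Mathlib

open Classical Matrix

noncomputable section

/-- `k`-tuples of elements of `V`. -/
abbrev Tup (V : Type) (k : ℕ) := Fin k → V

variable {V : Type}

/-- `v⟨i,x⟩` : the tuple obtained from `v` by substituting, for each `s`,
the entry of `v` in position `i s` by `x s`. -/
def substTup {k r : ℕ} (v : Tup V k) (i : Fin r → Fin k) (x : Tup V r) : Tup V k :=
  fun j => if h : ∃ s, i s = j then x h.choose else v j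

/-- `pr_j v = (v_{j 1}, …, v_{j r})`. -/
def prTup {k r : ℕ} (j : Fin r → Fin k) (v : Tup V k) : Tup V r := fun s => v (j s)

/-- `(w_1, …, w_r, w_r, …, w_r) : V^k`. -/
def extendTup [Nonempty V] {r : ℕ} (k : ℕ) (w : Tup V r) : Tup V k := fun i =>
  if h : (i : ℕ) < r then w ⟨i, h⟩
  else if h' : 0 < r then w ⟨r - 1, by omega⟩
  else Classical.arbitrary V

/-- The `r`-projection `pr_r γ` of a labelled partition (presented as a setoid) of `V^k`. -/
def prPart [Nonempty V] {k : ℕ} (r : ℕ) (γ : Setoid (Tup V k)) : Setoid (Tup V r) where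
  r w w' := γ.r (extendTup k w) (extendTup k w')
  iseqv := ⟨fun _ => γ.iseqv.refl _, fun h => γ.iseqv.symm h, fun h h' => γ.iseqv.trans h h'⟩

/-- `v^τ`, the tuple with `i`-th entry `v (τ⁻¹ i)`. -/
def permTup {k : ℕ} (τ : Equiv.Perm (Fin k)) (v : Tup V k) : Tup V k := fun i => v (τ.symm i)

/-- `γ ⪯ ρ` : the partition `ρ` refines the partition `γ`. -/
def Refines {A : Type*} (γ ρ : Setoid A) : Prop := ∀ u v : A, ρ.r u v → γ.r u v

/-- `γ ≈ ρ` : the partitions mutually refine each other. -/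
def PartEquiv {A : Type*} (γ ρ : Setoid A) : Prop := Refines γ ρ ∧ Refines ρ γ

/-- Invariance of a partition of `V^k` under `Sym(k)`. -/
def Invariant {k : ℕ} (γ : Setoid (Tup V k)) : Prop :=
  ∀ u v : Tup V k, γ.r u v → ∀ τ : Equiv.Perm (Fin k), γ.r (permTup τ u) (permTup τ v)

/-- `r`-consistency of a partition of `V^k`. -/
def Consistent [Nonempty V] {k : ℕ} (r : ℕ) (γ : Setoid (Tup V k)) : Prop :=
  ∀ u v : Tup V k, γ.r u v → ∀ j : Fin r → Fin k,
    (prPart r γ).r (prTup j u) (prTup j v)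

/-- Graph-like partitions of `V^k`. -/
def GraphLike [Nonempty V] {k : ℕ} (γ : Setoid (Tup V k)) : Prop :=
  Invariant γ ∧ (∀ r ≤ k, Consistent r γ) ∧
    ∀ u v : Tup V k, γ.r u v → ∀ i j : Fin k, u i = u j → v i = v j

/-- `{x ∈ V^r : γ(u⟨i,x⟩) = φ_i for all i ∈ [k]^(r)}`, where the colour tuple `φ` is
given by representatives. -/
def WLSet {k r : ℕ} (γ : Setoid (Tup V k)) (u : Tup V k)
    (φ : (Fin r → Fin k) → Tup V k) : Set (Tup V r) :=
  {x | ∀ i : Fin r → Fin k, Function.Injective i → γ.r (substTup u i x) (φ i)}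

/-- `{x ∈ V^r : γ(u⟨i,x⟩) = σ}`, where the colour `σ` is given by a representative `w`. -/
def CSet {k r : ℕ} (γ : Setoid (Tup V k)) (u : Tup V k)
    (i : Fin r → Fin k) (w : Tup V k) : Set (Tup V r) :=
  {x | γ.r (substTup u i x) w}

/-- `WL_{k,r}`-stability of a partition of `V^k`. -/
def WLStable {k : ℕ} (r : ℕ) (γ : Setoid (Tup V k)) : Prop :=
  r < k → ∀ u v : Tup V k, γ.r u v →
    ∀ φ : (Fin r → Fin k) → Tup V k, (WLSet γ u φ).ncard = (WLSet γ v φ).ncard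

/-- `C_{k,r}`-stability of a partition of `V^k`. -/
def CStable {k : ℕ} (r : ℕ) (γ : Setoid (Tup V k)) : Prop :=
  r < k → ∀ u v : Tup V k, γ.r u v →
    ∀ i : Fin r → Fin k, Function.Injective i → ∀ w : Tup V k,
      (CSet γ u i w).ncard = (CSet γ v i w).ncard

/-- The matrix `χ^{γ,v}_{i,σ}`, with the colour `σ` given by a representative `w`. -/
def chiMat (F : Type) [Field F] {k : ℕ} (γ : Setoid (Tup V k)) (v : Tup V k)
    (i : Fin 2 → Fin k) (w : Tup V k) : Matrix V V F :=
  Matrix.of fun x y => if γ.r (substTup v i ![x, y]) w then (1 : F) else 0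

/-- The matrix `χ^{γ,v}_φ`, with the colour tuple `φ` given by representatives. -/
def chiMatT (F : Type) [Field F] {k : ℕ} (γ : Setoid (Tup V k)) (v : Tup V k)
    (φ : (Fin 2 → Fin k) → Tup V k) : Matrix V V F :=
  Matrix.of fun x y =>
    if ∀ i : Fin 2 → Fin k, Function.Injective i → γ.r (substTup v i ![x, y]) (φ i)
    then (1 : F) else 0

/-- `IM_k^F`-stability of a partition of `V^k`. -/
def IMStable (F : Type) [Field F] [Fintype V] [DecidableEq V] {k : ℕ}
    (γ : Setoid (Tup V k)) : Prop :=
  2 < k → ∀ u v : Tup V k, γ.r u v →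
    ∀ i : Fin 2 → Fin k, Function.Injective i →
      ∃ S : (Matrix V V F)ˣ, ∀ w : Tup V k,
        (S : Matrix V V F) * chiMat F γ u i w * ((S⁻¹ : (Matrix V V F)ˣ) : Matrix V V F)
          = chiMat F γ v i w

/-- `IMt_k^F`-stability of a partition of `V^k`. -/
def IMtStable (F : Type) [Field F] [Fintype V] [DecidableEq V] {k : ℕ}
    (γ : Setoid (Tup V k)) : Prop :=
  2 < k → ∀ u v : Tup V k, γ.r u v →
    ∃ S : (Matrix V V F)ˣ, ∀ φ : (Fin 2 → Fin k) → Tup V k,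
      (S : Matrix V V F) * chiMatT F γ u φ * ((S⁻¹ : (Matrix V V F)ˣ) : Matrix V V F)
        = chiMatT F γ v φ

/-- The refinement operator `WL_{k,r}`. -/
def WLop {k : ℕ} (r : ℕ) (γ : Setoid (Tup V k)) : Setoid (Tup V k) :=
  if r < k then
    { r := fun u v => γ.r u v ∧ ∀ φ : (Fin r → Fin k) → Tup V k,
        (WLSet γ u φ).ncard = (WLSet γ v φ).ncard
      iseqv := by
        refine ⟨fun u => ⟨γ.iseqv.refl u, fun _ => rfl⟩, ?_, ?_⟩
        · rintro u v ⟨h1, h2⟩; exact ⟨γ.iseqv.symm h1, fun φ => (h2 φ).symm⟩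
        · rintro u v w ⟨h1, h2⟩ ⟨h1', h2'⟩
          exact ⟨γ.iseqv.trans h1 h1', fun φ => (h2 φ).trans (h2' φ)⟩ }
  else γ

/-- The refinement operator `C_{k,r}`. -/
def Cop {k : ℕ} (r : ℕ) (γ : Setoid (Tup V k)) : Setoid (Tup V k) :=
  if r < k then
    { r := fun u v => γ.r u v ∧ ∀ i : Fin r → Fin k, Function.Injective i →
        ∀ w : Tup V k, (CSet γ u i w).ncard = (CSet γ v i w).ncard
      iseqv := by
        refine ⟨fun u => ⟨γ.iseqv.refl u, fun _ _ _ => rfl⟩, ?_, ?_⟩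
        · rintro u v ⟨h1, h2⟩; exact ⟨γ.iseqv.symm h1, fun i hi w => (h2 i hi w).symm⟩
        · rintro u v w ⟨h1, h2⟩ ⟨h1', h2'⟩
          exact ⟨γ.iseqv.trans h1 h1', fun i hi x => (h2 i hi x).trans (h2' i hi x)⟩ }
  else γ


theorem conjRefl {M : Type*} [Monoid M] (A : M) :
    ((1 : Mˣ) : M) * A * (((1 : Mˣ)⁻¹ : Mˣ) : M) = A := by simp

theorem conjSymm {M : Type*} [Monoid M] (S : Mˣ) {A B : M}
    (h : (S : M) * A * ((S⁻¹ : Mˣ) : M) = B) :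
    ((S⁻¹ : Mˣ) : M) * B * (((S⁻¹)⁻¹ : Mˣ) : M) = A := by
  subst h
  rw [inv_inv]
  simp [mul_assoc, Units.inv_mul_cancel_left, Units.inv_mul]

theorem conjTrans {M : Type*} [Monoid M] (S T : Mˣ) {A B C : M}
    (h1 : (S : M) * A * ((S⁻¹ : Mˣ) : M) = B)
    (h2 : (T : M) * B * ((T⁻¹ : Mˣ) : M) = C) :
    ((T * S : Mˣ) : M) * A * (((T * S)⁻¹ : Mˣ) : M) = C := by
  subst h1; subst h2
  simp [Units.val_mul, _root_.mul_inv_rev, mul_assoc]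

/-- The refinement operator `IM_k^F`. -/
def IMop (F : Type) [Field F] [Fintype V] [DecidableEq V] {k : ℕ}
    (γ : Setoid (Tup V k)) : Setoid (Tup V k) :=
  if 2 < k then
    { r := fun u v => γ.r u v ∧ ∀ i : Fin 2 → Fin k, Function.Injective i →
        ∃ S : (Matrix V V F)ˣ, ∀ w : Tup V k,
          (S : Matrix V V F) * chiMat F γ u i w * ((S⁻¹ : (Matrix V V F)ˣ) : Matrix V V F)
            = chiMat F γ v i w
      iseqv := by
        refine ⟨fun u => ⟨γ.iseqv.refl u, fun i _ => ⟨1, fun w => conjRefl _⟩⟩, ?_, ?_⟩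
        · rintro u v ⟨h1, h2⟩
          refine ⟨γ.iseqv.symm h1, fun i hi => ?_⟩
          obtain ⟨S, hS⟩ := h2 i hi
          exact ⟨S⁻¹, fun w => conjSymm S (hS w)⟩
        · rintro u v w ⟨h1, h2⟩ ⟨h1', h2'⟩
          refine ⟨γ.iseqv.trans h1 h1', fun i hi => ?_⟩
          obtain ⟨S, hS⟩ := h2 i hi
          obtain ⟨T, hT⟩ := h2' i hi
          exact ⟨T * S, fun x => conjTrans S T (hS x) (hT x)⟩ }
  else γ

/-- The refinement operator `IMt_k^F`. -/
def IMtop (F : Type) [Field F] [Fintype V] [DecidableEq V] {k : ℕ}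
    (γ : Setoid (Tup V k)) : Setoid (Tup V k) :=
  if 2 < k then
    { r := fun u v => γ.r u v ∧
        ∃ S : (Matrix V V F)ˣ, ∀ φ : (Fin 2 → Fin k) → Tup V k,
          (S : Matrix V V F) * chiMatT F γ u φ * ((S⁻¹ : (Matrix V V F)ˣ) : Matrix V V F)
            = chiMatT F γ v φ
      iseqv := by
        refine ⟨fun u => ⟨γ.iseqv.refl u, ⟨1, fun φ => conjRefl _⟩⟩, ?_, ?_⟩
        · rintro u v ⟨h1, ⟨S, hS⟩⟩
          exact ⟨γ.iseqv.symm h1, ⟨S⁻¹, fun φ => conjSymm S (hS φ)⟩⟩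
        · rintro u v w ⟨h1, ⟨S, hS⟩⟩ ⟨h1', ⟨T, hT⟩⟩
          exact ⟨γ.iseqv.trans h1 h1', ⟨T * S, fun φ => conjTrans S T (hS φ) (hT φ)⟩⟩ }
  else γ

/-- Iterate a refinement operator `|V|^k` times, reaching its stable fixed point. -/
def stabilize [Fintype V] {k : ℕ} (R : Setoid (Tup V k) → Setoid (Tup V k))
    (γ : Setoid (Tup V k)) : Setoid (Tup V k) :=
  R^[Fintype.card V ^ k] γ

/-- A graph on `V` : a labelled partition of `V²` that is a rainbow. -/
def IsGraph (Γ : Setoid (Tup V 2)) : Prop :=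
  (∀ u x y : V, Γ.r ![u, u] ![x, y] → x = y) ∧
  (∀ u v u' v' : V, Γ.r ![u, v] ![u', v'] ↔ Γ.r ![v, u] ![v', u'])

/-- The atomic-type partition `α_{k,Γ}` of `V^k` determined by a graph `Γ`. -/
def atomicPart {k : ℕ} (Γ : Setoid (Tup V 2)) : Setoid (Tup V k) where
  r u v := ∀ i j : Fin k, i ≠ j → Γ.r ![u i, u j] ![v i, v j]
  iseqv := ⟨fun _ _ _ _ => Γ.iseqv.refl _, fun h i j hij => Γ.iseqv.symm (h i j hij),
    fun h h' i j hij => Γ.iseqv.trans (h i j hij) (h' i j hij)⟩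

/-- `WL̄_{k,r}(Γ)`. -/
def WLbarR [Nonempty V] [Fintype V] (k r : ℕ) (Γ : Setoid (Tup V 2)) : Setoid (Tup V 2) :=
  if k ≤ 1 then Γ else prPart 2 (stabilize (WLop (k := k) r) (atomicPart Γ))

/-- `C̄_{k,r}(Γ)`. -/
def CbarR [Nonempty V] [Fintype V] (k r : ℕ) (Γ : Setoid (Tup V 2)) : Setoid (Tup V 2) :=
  if k ≤ 1 then Γ else prPart 2 (stabilize (Cop (k := k) r) (atomicPart Γ))

/-- `WL̄_k(Γ) = WL̄_{k,1}(Γ)`. -/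
def WLbar [Nonempty V] [Fintype V] (k : ℕ) (Γ : Setoid (Tup V 2)) : Setoid (Tup V 2) :=
  WLbarR k 1 Γ

/-- `C̄_k(Γ) = C̄_{k,1}(Γ)`. -/
def Cbar [Nonempty V] [Fintype V] (k : ℕ) (Γ : Setoid (Tup V 2)) : Setoid (Tup V 2) :=
  CbarR k 1 Γ

/-- `IM̄_k^F(Γ)`. -/
def IMbar (F : Type) [Field F] [Nonempty V] [Fintype V] [DecidableEq V]
    (k : ℕ) (Γ : Setoid (Tup V 2)) : Setoid (Tup V 2) :=
  if k ≤ 1 then Γ else prPart 2 (stabilize (IMop (k := k) F) (atomicPart Γ))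

/-- `IMt̄_k^F(Γ)`. -/
def IMtbar (F : Type) [Field F] [Nonempty V] [Fintype V] [DecidableEq V]
    (k : ℕ) (Γ : Setoid (Tup V 2)) : Setoid (Tup V 2) :=
  if k ≤ 1 then Γ else prPart 2 (stabilize (IMtop (k := k) F) (atomicPart Γ))

/-- A nonempty finite set together with a graph on it. -/
structure FinGraph where
  V : Type
  [instFintype : Fintype V]
  [instDecEq : DecidableEq V]
  [instNonempty : Nonempty V]
  Γ : Setoid (Tup V 2)
  isGraph : IsGraph Γ

attribute [instance] FinGraph.instFintype FinGraph.instDecEq FinGraph.instNonempty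

section AuxProof

variable {V : Type}

lemma extendTup_self [Nonempty V] {k : ℕ} (z : Tup V k) : extendTup k z = z := by
  funext m
  simp [extendTup, m.isLt]

lemma substTup_apply_mem {k r : ℕ} (v : Tup V k) {i : Fin r → Fin k}
    (hi : Function.Injective i) (x : Tup V r) (s : Fin r) :
    substTup v i x (i s) = x s := by
  have h : ∃ t, i t = i s := ⟨s, rfl⟩
  simp only [substTup, dif_pos h]
  exact congrArg x (hi h.choose_spec)

lemma substTup_apply_not_mem {k r : ℕ} (v : Tup V k) (i : Fin r → Fin k)
    (x : Tup V r) (j : Fin k) (h : ¬ ∃ s, i s = j) : substTup v i x j = v j := by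
  simp only [substTup, dif_neg h]

open Finset in
lemma count_comp_aux {α β : Type*} [Fintype α] [DecidableEq β] (f g : α → β)
    (h : ∀ b, (univ.filter (fun a => f a = b)).card = (univ.filter (fun a => g a = b)).card)
    (p : β → Prop) [DecidablePred p] :
    (univ.filter (fun a => p (f a))).card = (univ.filter (fun a => p (g a))).card := by
  classical
  set t : Finset β := ((univ.image f ∪ univ.image g).filter p) with ht
  have key : ∀ f' : α → β, (∀ a : α, f' a ∈ univ.image f ∪ univ.image g) →
      (univ.filter (fun a => p (f' a))).card
        = ∑ b ∈ t, (univ.filter (fun a => f' a = b)).card := by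
    intro f' hf'
    rw [Finset.card_eq_sum_card_fiberwise
      (f := f') (t := t) (fun x hx => by
        simp only [ht, mem_filter]
        exact mem_filter.mpr ⟨hf' x, (mem_filter.mp hx).2⟩)]
    refine Finset.sum_congr rfl fun b hb => ?_
    have hpb : p b := (mem_filter.mp hb).2
    congr 1
    ext a
    simp only [mem_filter, mem_univ, true_and]
    constructor
    · rintro ⟨-, h2⟩; exact h2
    · intro h2; exact ⟨by rw [h2]; exact hpb, h2⟩
  rw [key f (fun a => mem_union_left _ (mem_image_of_mem f (mem_univ a))),
    key g (fun a => mem_union_right _ (mem_image_of_mem g (mem_univ a)))]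
  exact Finset.sum_congr rfl fun b _ => h b

open Finset in
lemma ncard_setOf_eq_card_filter {α : Type*} [Fintype α] (P : α → Prop) [DecidablePred P] :
    {x | P x}.ncard = (univ.filter P).card := by
  rw [← Set.ncard_coe_finset]
  congr 1
  ext x
  simp

end AuxProof

/-- The `k`-projection of a graph-like `IM_{k+2}^F`-stable partition is `C_k`-stable. -/
theorem im_stable_proj_c_stable (F : Type) [Field F] (V : Type) [Fintype V]
    [DecidableEq V] [Nonempty V] (k : ℕ) (γ : Setoid (Tup V (k + 2)))
    (hγ : GraphLike γ) (h : IMStable F γ) : CStable 1 (prPart k γ) := by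
  classical
  intro hk u v huv i hi w
  have hk0 : 0 < k := by omega
  -- positions in `Fin (k+2)`
  set i0 : Fin (k + 2) := ⟨(i 0 : ℕ), by omega⟩ with hi0
  set lst : Fin (k + 2) := ⟨k + 1, by omega⟩ with hlst
  set ip : Fin 2 → Fin (k + 2) := ![i0, lst] with hipdef
  have hi0lst : i0 ≠ lst := by
    intro hcontra
    have : (i 0 : ℕ) = k + 1 := congrArg Fin.val hcontra
    have := (i 0).isLt
    omega
  have hip : Function.Injective ip := by
    intro s t hst
    fin_cases s <;> fin_cases t <;>
      simp only [hipdef, Matrix.cons_val_zero, Matrix.cons_val_one, Matrix.head_cons] at hst <;>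
      first
        | rfl
        | exact absurd hst hi0lst
        | exact absurd hst.symm hi0lst
  -- base tuples and substituted tuples
  set u' : Tup V (k + 2) := extendTup (k + 2) u with hu'
  set v' : Tup V (k + 2) := extendTup (k + 2) v with hv'
  set W : Tup V (k + 2) := extendTup (k + 2) w with hW
  set T : Tup V k → V → Tup V (k + 2) :=
    fun z y => substTup (extendTup (k + 2) z) ip ![y, y] with hT
  have huv' : γ.r u' v' := huv
  have hpat : ∀ a b : Tup V (k + 2), γ.r a b →
      ∀ s t : Fin (k + 2), a s = a t → b s = b t := hγ.2.2
  -- closure under arbitrary coordinate maps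
  have hcons : ∀ a b : Tup V (k + 2), γ.r a b →
      ∀ j : Fin (k + 2) → Fin (k + 2), γ.r (prTup j a) (prTup j b) := by
    intro a b hab j
    have h1 : (prPart (k + 2) γ).r (prTup j a) (prTup j b) :=
      hγ.2.1 (k + 2) le_rfl a b hab j
    have h2 : γ.r (extendTup (k + 2) (prTup j a)) (extendTup (k + 2) (prTup j b)) := h1
    rwa [extendTup_self, extendTup_self] at h2
  -- values of T at the substituted positions
  have hTi0 : ∀ (z : Tup V k) (y : V), T z y i0 = y := by
    intro z y
    have := substTup_apply_mem (extendTup (k + 2) z) hip ![y, y] 0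
    simpa [hipdef] using this
  have hTlst : ∀ (z : Tup V k) (y : V), T z y lst = y := by
    intro z y
    have := substTup_apply_mem (extendTup (k + 2) z) hip ![y, y] 1
    simpa [hipdef] using this
  -- the invertible matrix from IM-stability
  obtain ⟨S, hS⟩ := h (by omega) u' v' huv' ip hip
  -- fiberwise counts agree, via ranks of diagonal matrices
  have fib : ∀ a : Tup V (k + 2),
      (Finset.univ.filter fun y : V => γ.r (T u y) a).card
        = (Finset.univ.filter fun y : V => γ.r (T v y) a).card := by
    intro a
    by_cases hne : (∃ y, γ.r (T u y) a) ∨ (∃ y, γ.r (T v y) a)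
    · -- the class of `a` forces equality at positions i0 and lst
      have hdiag : ∀ b : Tup V (k + 2), γ.r b a → b i0 = b lst := by
        intro b hb
        obtain (⟨y, hy⟩ | ⟨y, hy⟩) := hne
        · have hrel : γ.r (T u y) b := γ.iseqv.trans hy (γ.iseqv.symm hb)
          exact hpat _ _ hrel i0 lst (by rw [hTi0, hTlst])
        · have hrel : γ.r (T v y) b := γ.iseqv.trans hy (γ.iseqv.symm hb)
          exact hpat _ _ hrel i0 lst (by rw [hTi0, hTlst])
      -- the chi matrices are diagonal
      have hdiagmat : ∀ z : Tup V k,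
          chiMat F γ (extendTup (k + 2) z) ip a
            = Matrix.diagonal (fun y => if γ.r (T z y) a then (1 : F) else 0) := by
        intro z
        ext x y
        by_cases hxy : x = y
        · subst hxy
          rw [Matrix.diagonal_apply_eq]
          rfl
        · rw [Matrix.diagonal_apply_ne _ hxy]
          show (if γ.r (substTup (extendTup (k + 2) z) ip ![x, y]) a then (1 : F) else 0) = 0
          rw [if_neg]
          intro hr
          apply hxy
          have := hdiag _ hr
          rwa [show ((substTup (extendTup (k + 2) z) ip ![x, y]) i0 = x) from
              by simpa [hipdef] using substTup_apply_mem (extendTup (k + 2) z) hip ![x, y] 0,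
            show ((substTup (extendTup (k + 2) z) ip ![x, y]) lst = y) from
              by simpa [hipdef] using substTup_apply_mem (extendTup (k + 2) z) hip ![x, y] 1]
            at this
      -- ranks agree by conjugation
      have hrank : (chiMat F γ u' ip a).rank = (chiMat F γ v' ip a).rank := by
        rw [← hS a]
        rw [Matrix.rank_mul_eq_left_of_isUnit_det _ _
            ((Matrix.isUnit_iff_isUnit_det _).mp (S⁻¹).isUnit),
          Matrix.rank_mul_eq_right_of_isUnit_det _ _
            ((Matrix.isUnit_iff_isUnit_det _).mp S.isUnit)]
      -- rank of a 0/1 diagonal matrix is the number of ones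
      have hcount : ∀ z : Tup V k,
          (Matrix.diagonal (fun y => if γ.r (T z y) a then (1 : F) else 0)).rank
            = (Finset.univ.filter fun y : V => γ.r (T z y) a).card := by
        intro z
        rw [Matrix.rank_diagonal]
        rw [Fintype.card_subtype]
        congr 1
        ext y
        by_cases hy : γ.r (T z y) a <;> simp [hy]
      have := hrank
      rw [hu', hv', hdiagmat u, hdiagmat v, hcount u, hcount v] at this
      exact this
    · push_neg at hne
      rw [Finset.filter_eq_empty_iff.mpr (fun y _ => hne.1 y),
        Finset.filter_eq_empty_iff.mpr (fun y _ => hne.2 y)]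
  -- the coordinate map sending the extended substituted tuple to a T-tuple
  set jmap : Fin (k + 2) → Fin (k + 2) :=
    fun m => if m.val < k then m else (if (i 0 : ℕ) = k - 1 then lst else ⟨k, by omega⟩)
    with hjmap
  have hE : ∀ (z : Tup V k) (x : Tup V 1),
      extendTup (k + 2) (substTup z i x) = prTup jmap (T z (x 0)) := by
    intro z x
    funext m
    show extendTup (k + 2) (substTup z i x) m = T z (x 0) (jmap m)
    by_cases hm : m.val < k
    · have hj : jmap m = m := by simp [hjmap, hm]
      rw [hj]
      have hL : extendTup (k + 2) (substTup z i x) m = substTup z i x ⟨m.val, hm⟩ := by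
        simp [extendTup, hm]
      rw [hL]
      by_cases hs : ∃ s : Fin 1, i s = ⟨m.val, hm⟩
      · -- position m is the substituted position
        have h0 : i 0 = ⟨m.val, hm⟩ := by
          obtain ⟨s, hs'⟩ := hs
          rwa [Subsingleton.elim (0 : Fin 1) s]
        have hmi0 : m = i0 := by
          apply Fin.ext
          simp [hi0, h0]
        have hLval : substTup z i x ⟨m.val, hm⟩ = x 0 := by
          rw [← h0, substTup_apply_mem z hi x 0]
        rw [hLval, hmi0, hTi0]
      · have hLval : substTup z i x ⟨m.val, hm⟩ = z ⟨m.val, hm⟩ :=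
          substTup_apply_not_mem z i x _ hs
        rw [hLval]
        have hs2 : ¬ ∃ s : Fin 2, ip s = m := by
          rintro ⟨s, hs'⟩
          fin_cases s
          · apply hs
            refine ⟨0, ?_⟩
            apply Fin.ext
            have : i0 = m := hs'
            have hval : (i 0 : ℕ) = m.val := congrArg Fin.val this
            simpa using hval
          · have : lst = m := hs'
            have : k + 1 = m.val := congrArg Fin.val this
            omega
        rw [show T z (x 0) m = extendTup (k + 2) z m from
          substTup_apply_not_mem _ ip ![x 0, x 0] m hs2]
        simp [extendTup, hm]
    · -- m is position k or k+1
      have hL : extendTup (k + 2) (substTup z i x) m = substTup z i x ⟨k - 1, by omega⟩ := by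
        simp [extendTup, hm, hk0]
      rw [hL]
      by_cases h1 : (i 0 : ℕ) = k - 1
      · have hj : jmap m = lst := by simp [hjmap, hm, h1]
        have h0 : i 0 = ⟨k - 1, by omega⟩ := by
          apply Fin.ext; simpa using h1
        have hLval : substTup z i x ⟨k - 1, by omega⟩ = x 0 := by
          rw [← h0, substTup_apply_mem z hi x 0]
        rw [hLval, hj, hTlst]
      · have hj : jmap m = ⟨k, by omega⟩ := by simp [hjmap, hm, h1]
        have hs : ¬ ∃ s : Fin 1, i s = ⟨k - 1, by omega⟩ := by
          rintro ⟨s, hs'⟩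
          apply h1
          rw [Subsingleton.elim (0 : Fin 1) s, hs']
        have hs2 : ¬ ∃ s : Fin 2, ip s = ⟨k, by omega⟩ := by
          rintro ⟨s, hs'⟩
          fin_cases s
          · have : (i 0 : ℕ) = k := by
              have := congrArg Fin.val hs'
              simpa [hi0, hipdef] using this
            have := (i 0).isLt
            omega
          · have := congrArg Fin.val hs'
            simp [hipdef, hlst] at this
        have e2 : T z (x 0) ⟨k, by omega⟩ = extendTup (k + 2) z ⟨k, by omega⟩ :=
          substTup_apply_not_mem _ ip ![x 0, x 0] _ hs2
        have e3 : extendTup (k + 2) z ⟨k, by omega⟩ = z ⟨k - 1, by omega⟩ := by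
          simp [extendTup, hk0]
        exact (substTup_apply_not_mem z i x _ hs).trans
          ((e3.symm.trans e2.symm).trans (congrArg (T z (x 0)) hj.symm))
    -- end hE
  -- the class-level predicate
  set p' : (Tup V (k + 2) → Prop) → Prop :=
    fun c => ∃ a, c a ∧ γ.r (prTup jmap a) W with hp'
  have hmemiff : ∀ (z : Tup V k) (x : Tup V 1),
      γ.r (extendTup (k + 2) (substTup z i x)) W ↔ p' (fun b => γ.r (T z (x 0)) b) := by
    intro z x
    rw [hE z x]
    constructor
    · intro hr
      exact ⟨T z (x 0), γ.iseqv.refl _, hr⟩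
    · rintro ⟨a, ha, ha2⟩
      exact γ.iseqv.trans (hcons _ _ ha jmap) ha2
  -- fiberwise counts for the class-valued maps
  have fib' : ∀ c : Tup V (k + 2) → Prop,
      (Finset.univ.filter fun y : V => (fun b => γ.r (T u y) b) = c).card
        = (Finset.univ.filter fun y : V => (fun b => γ.r (T v y) b) = c).card := by
    intro c
    have eclass : ∀ (z : Tup V k) (y : V) (a : Tup V (k + 2)),
        ((fun b => γ.r (T z y) b) = fun b => γ.r a b) ↔ γ.r (T z y) a := by
      intro z y a
      constructor
      · intro he
        have := congrFun he a
        rw [this]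
      · intro hr
        funext b
        exact propext ⟨fun h2 => γ.iseqv.trans (γ.iseqv.symm hr) h2,
          fun h2 => γ.iseqv.trans hr h2⟩
    by_cases hcu : ∃ y0, (fun b => γ.r (T u y0) b) = c
    · obtain ⟨y0, rfl⟩ := hcu
      rw [Finset.filter_congr (fun y _ => eclass u y (T u y0)),
        Finset.filter_congr (fun y _ => eclass v y (T u y0))]
      exact fib (T u y0)
    · by_cases hcv : ∃ y0, (fun b => γ.r (T v y0) b) = c
      · obtain ⟨y0, rfl⟩ := hcv
        rw [Finset.filter_congr (fun y _ => eclass u y (T v y0)),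
          Finset.filter_congr (fun y _ => eclass v y (T v y0))]
        exact fib (T v y0)
      · rw [Finset.filter_eq_empty_iff.mpr (fun y _ => fun hc => hcu ⟨y, hc⟩),
          Finset.filter_eq_empty_iff.mpr (fun y _ => fun hc => hcv ⟨y, hc⟩)]
  -- assemble everything
  have hCSet : ∀ z : Tup V k, CSet (prPart k γ) z i w
      = {x : Tup V 1 | γ.r (extendTup (k + 2) (substTup z i x)) W} := fun z => rfl
  have hbij : ∀ z : Tup V k,
      (Finset.univ.filter fun x : Tup V 1 =>
          γ.r (extendTup (k + 2) (substTup z i x)) W).card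
        = (Finset.univ.filter fun y : V => p' (fun b => γ.r (T z y) b)).card := by
    intro z
    apply Finset.card_bij (fun (x : Tup V 1) _ => x 0)
    · intro x hx
      simp only [Finset.mem_filter, Finset.mem_univ, true_and] at hx ⊢
      exact (hmemiff z x).mp hx
    · intro x hx x' hx' hxx
      funext s
      rw [Subsingleton.elim s (0 : Fin 1)]
      exact hxx
    · intro y hy
      refine ⟨fun _ => y, ?_, rfl⟩
      simp only [Finset.mem_filter, Finset.mem_univ, true_and] at hy ⊢
      exact (hmemiff z (fun _ => y)).mpr hy
  rw [hCSet u, hCSet v, ncard_setOf_eq_card_filter, ncard_setOf_eq_card_filter,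
    hbij u, hbij v]
  exact count_comp_aux (fun y => (fun b => γ.r (T u y) b))
    (fun y => (fun b => γ.r (T v y) b)) fib' p'

end
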